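/- arXiv:1410.1447 — 2 statements merged into one kernel-verified Lean document; each statement's English description precedes it below -/
import Mathlib

section
/- Let k ≥ 1, let u, v be complex numbers with u + v = 1, u ≠ 0 and u ≠ v, and set τ = v/u. Then for any pairwise distinct complex numbers ξ₁, …, ξ_k, the symmetrization identity holds: ∑_{σ ∈ S_k} ∏_{1 ≤ i < j ≤ k} (u + v ξ_{σ(i)} ξ_{σ(j)} − ξ_{σ(i)})/(ξ_{σ(j)} − ξ_{σ(i)}) = u^{k(k−1)/2} ∏_{i=1}^{k} (1 − τ^i)/(1 − τ), where the sum is over all permutations σ of {1, …, k}. -/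
open Polynomial Finset



lemma lagrange_sum (t : Finset ℂ) (P : ℂ[X]) (hP : P.natDegree < t.card) :
    ∑ x ∈ t, P.eval x / ∏ y ∈ t.erase x, (x - y) = P.coeff (t.card - 1) := by
  classical
  set Q : ℂ[X] := ∑ x ∈ t, C (P.eval x / ∏ y ∈ t.erase x, (x - y)) *
      ∏ y ∈ t.erase x, (X - C y) with hQ
  have hmon : ∀ x ∈ t, (∏ y ∈ t.erase x, (X - C y)).Monic := by
    intro x hx
    exact monic_prod_of_monic _ _ fun y _ => monic_X_sub_C y
  have hdeg : ∀ x ∈ t, (∏ y ∈ t.erase x, (X - C y)).natDegree = t.card - 1 := by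
    intro x hx
    rw [natDegree_prod _ _ fun y _ => X_sub_C_ne_zero y]
    simp [Finset.card_erase_of_mem hx]
  have hQP : Q = P := by
    have hz : Q - P = 0 := by
      apply Polynomial.eq_zero_of_natDegree_lt_card_of_eval_eq_zero' _ t
      · intro x hx
        have : Q.eval x = P.eval x := by
          rw [hQ]
          rw [eval_finset_sum]
          rw [Finset.sum_eq_single x]
          · have hne : (∏ y ∈ t.erase x, (x - y)) ≠ 0 := by
              apply Finset.prod_ne_zero_iff.2
              intro y hy
              exact sub_ne_zero.2 (Finset.ne_of_mem_erase hy).symm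
            simp only [eval_mul, eval_C, eval_prod, eval_sub, eval_X]
            field_simp
          · intro b hb hbx
            simp only [eval_mul, eval_C, eval_prod, eval_sub, eval_X]
            rw [Finset.prod_eq_zero (Finset.mem_erase.2 ⟨Ne.symm hbx, hx⟩) (sub_self x)]
            ring
          · intro h; exact absurd hx h
        simp [this]
      · apply lt_of_le_of_lt (natDegree_sub_le _ _)
        rw [max_lt_iff]
        constructor
        · apply lt_of_le_of_lt (natDegree_sum_le _ _)
          rw [Finset.fold_max_lt]
          refine ⟨Finset.card_pos.2 ?_ , ?_⟩
          · by_contra h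
            simp only [Finset.not_nonempty_iff_eq_empty] at h
            rw [h] at hP; simp at hP
          · intro x hx
            apply lt_of_le_of_lt (natDegree_mul_le)
            rw [hdeg x hx]
            simp only [natDegree_C, zero_add]
            omega
        · exact hP
    have := sub_eq_zero.1 hz
    exact this
  have : Q.coeff (t.card - 1) = ∑ x ∈ t, P.eval x / ∏ y ∈ t.erase x, (x - y) := by
    rw [hQ, finset_sum_coeff]
    apply Finset.sum_congr rfl
    intro x hx
    rw [coeff_C_mul]
    have : (∏ y ∈ t.erase x, (X - C y)).coeff (t.card - 1) = 1 := by
      have h1 := (hmon x hx).coeff_natDegree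
      rwa [hdeg x hx] at h1
    rw [this, mul_one]
  rw [← this, hQP]



lemma keyB (u v : ℂ) (huv : u + v = 1) (hu : u ≠ 0) (huv' : u ≠ v) :
    ∀ n : ℕ, ∀ s : Finset ℂ, s.card = n →
    ∑ x ∈ s, ∏ y ∈ s.erase x, (u + v*x*y - x)/(y - x) = (u^n - v^n)/(u - v) := by
  have hsub : u - v ≠ 0 := sub_ne_zero.2 huv'
  intro n
  induction n using Nat.strong_induction_on with
  | _ n ih =>
  intro s hs
  rcases n with _ | m
  · rw [Finset.card_eq_zero.1 hs]
    simp
  by_cases h1 : (1:ℂ) ∈ s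
  -- Case A : 1 ∈ s
  · rw [← Finset.sum_erase_add s _ h1]
    have hterm1 : ∏ y ∈ s.erase 1, (u + v*1*y - 1)/(y - 1) = v ^ m := by
      have hfac : ∀ y ∈ s.erase 1, (u + v*1*y - 1)/(y - 1) = v := by
        intro y hy
        have hy1 : y - 1 ≠ 0 := sub_ne_zero.2 (Finset.ne_of_mem_erase hy)
        field_simp
        linear_combination huv
      rw [Finset.prod_congr rfl hfac, Finset.prod_const, Finset.card_erase_of_mem h1, hs]
      norm_num
    have hrest : ∀ x ∈ s.erase 1, ∏ y ∈ s.erase x, (u + v*x*y - x)/(y - x)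
        = u * ∏ y ∈ (s.erase 1).erase x, (u + v*x*y - x)/(y - x) := by
      intro x hx
      have hx1 : x ≠ 1 := Finset.ne_of_mem_erase hx
      have h1x : (1:ℂ) ∈ s.erase x := Finset.mem_erase.2 ⟨Ne.symm hx1, h1⟩
      rw [← Finset.mul_prod_erase _ _ h1x, Finset.erase_right_comm]
      congr 1
      have h1x' : (1:ℂ) - x ≠ 0 := sub_ne_zero.2 (Ne.symm hx1)
      field_simp
      linear_combination x*huv
    rw [Finset.sum_congr rfl hrest, ← Finset.mul_sum, hterm1,
      ih m (Nat.lt_succ_self m) (s.erase 1) (by rw [Finset.card_erase_of_mem h1, hs]; norm_num)]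
    field_simp
    ring
  · by_cases hvu : ∃ x ∈ s, v * x = u
    -- Case B : u/v ∈ s
    · obtain ⟨x0, hx0s, hx0⟩ := hvu
      rw [← Finset.sum_erase_add s _ hx0s]
      have hterm0 : ∏ y ∈ s.erase x0, (u + v*x0*y - x0)/(y - x0) = u ^ m := by
        have hfac : ∀ y ∈ s.erase x0, (u + v*x0*y - x0)/(y - x0) = u := by
          intro y hy
          have hy0 : y - x0 ≠ 0 := sub_ne_zero.2 (Finset.ne_of_mem_erase hy)
          field_simp
          linear_combination (y-1)*hx0 + x0*huv
        rw [Finset.prod_congr rfl hfac, Finset.prod_const, Finset.card_erase_of_mem hx0s, hs]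
        norm_num
      have hrest : ∀ x ∈ s.erase x0, ∏ y ∈ s.erase x, (u + v*x*y - x)/(y - x)
          = v * ∏ y ∈ (s.erase x0).erase x, (u + v*x*y - x)/(y - x) := by
        intro x hx
        have hxx0 : x ≠ x0 := Finset.ne_of_mem_erase hx
        have h0x : x0 ∈ s.erase x := Finset.mem_erase.2 ⟨Ne.symm hxx0, hx0s⟩
        rw [← Finset.mul_prod_erase _ _ h0x, Finset.erase_right_comm]
        congr 1
        have h0x' : x0 - x ≠ 0 := sub_ne_zero.2 (Ne.symm hxx0)
        field_simp
        linear_combination (x-1)*hx0 + x*huv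
      rw [Finset.sum_congr rfl hrest, ← Finset.mul_sum, hterm0,
        ih m (Nat.lt_succ_self m) (s.erase x0) (by rw [Finset.card_erase_of_mem hx0s, hs]; norm_num)]
      field_simp
      ring
    · by_cases hv : v = 0
      -- Case C : v = 0
      · have hu1 : u = 1 := by linear_combination huv - hv
        subst hv hu1
        have hconv : ∀ x ∈ s, ∏ y ∈ s.erase x, ((1:ℂ) + 0*x*y - x)/(y - x)
            = Polynomial.eval x ((X - C 1)^m : ℂ[X]) / ∏ y ∈ s.erase x, (x - y) := by
          intro x hx
          have hc : (s.erase x).card = m := by rw [Finset.card_erase_of_mem hx, hs]; norm_num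
          calc ∏ y ∈ s.erase x, ((1:ℂ) + 0*x*y - x)/(y - x)
              = ∏ y ∈ s.erase x, ((x - 1)/(x - y)) := by
                apply Finset.prod_congr rfl
                intro y hy
                rw [show x - y = -(y - x) by ring, div_neg, ← neg_div]
                congr 1; ring
            _ = (∏ y ∈ s.erase x, (x - 1)) / ∏ y ∈ s.erase x, (x - y) :=
                Finset.prod_div_distrib _ _
            _ = Polynomial.eval x ((X - C 1)^m : ℂ[X]) / ∏ y ∈ s.erase x, (x - y) := by
                rw [Finset.prod_const, hc]; simp
        rw [Finset.sum_congr rfl hconv, lagrange_sum s _ (by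
            rw [natDegree_pow, natDegree_X_sub_C, mul_one, hs]; omega)]
        rw [hs]
        have hmonic : ((X - C 1 : ℂ[X])^m).Monic := (monic_X_sub_C 1).pow m
        have hdeg : ((X - C 1 : ℂ[X])^m).natDegree = m := by
          rw [natDegree_pow, natDegree_X_sub_C, mul_one]
        have hco := hmonic.coeff_natDegree
        rw [hdeg] at hco
        simpa using hco
      -- Case D : generic
      · have hvx : ∀ x ∈ s, u - v * x ≠ 0 := by
          intro x hx h
          exact hvu ⟨x, hx, by linear_combination -h⟩
        set w := u / v with hw
        have hvw : v * w = u := by rw [hw]; field_simp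
        have hw1 : w ≠ 1 := fun h => huv' (by rw [h, mul_one] at hvw; exact hvw.symm)
        have hws : w ∉ s := fun h => hvu ⟨w, h, hvw⟩
        have h1ws : (1:ℂ) ∉ insert w s := by
          simp only [Finset.mem_insert]
          push_neg
          exact ⟨Ne.symm hw1, h1⟩
        have hx1 : ∀ x ∈ s, x ≠ 1 := fun x hx h => h1 (h ▸ hx)
        have hxw : ∀ x ∈ s, x ≠ w := fun x hx h => hws (h ▸ hx)
        set t : Finset ℂ := insert 1 (insert w s) with ht
        have hcard : t.card = m + 3 := by
          rw [ht, Finset.card_insert_of_notMem h1ws, Finset.card_insert_of_notMem hws, hs]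
        set P : ℂ[X] := ∏ y ∈ s, (C (v*y - 1) * X + C u) with hP
        have hPdeg : P.natDegree ≤ m + 1 := by
          refine le_trans (natDegree_prod_le _ _) ?_
          refine le_trans (Finset.sum_le_card_nsmul _ _ 1 fun y _ => natDegree_linear_le) ?_
          rw [hs, smul_eq_mul, mul_one]
        have hev : ∀ z : ℂ, P.eval z = ∏ y ∈ s, (u + (v*y - 1)*z) := by
          intro z; rw [hP, eval_prod]
          apply Finset.prod_congr rfl
          intro y _
          simp; ring
        have hls := lagrange_sum t P (by omega)
        rw [show t.card - 1 = m + 2 by omega,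
          coeff_eq_zero_of_natDegree_lt (by omega)] at hls
        rw [ht, Finset.sum_insert h1ws, Finset.sum_insert hws] at hls
        have hDx : ∀ x ∈ s, ∏ y ∈ s.erase x, (x - y) ≠ 0 := by
          intro x hx
          exact Finset.prod_ne_zero_iff.2 fun y hy =>
            sub_ne_zero.2 (Ne.symm (Finset.ne_of_mem_erase hy))
        have hB : ∏ y ∈ s, (y - (1:ℂ)) ≠ 0 :=
          Finset.prod_ne_zero_iff.2 fun y hy => sub_ne_zero.2 (hx1 y hy)
        have hD : ∏ y ∈ s, (w - y) ≠ 0 :=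
          Finset.prod_ne_zero_iff.2 fun y hy => sub_ne_zero.2 (Ne.symm (hxw y hy))
        have h1w : (1:ℂ) - w ≠ 0 := sub_ne_zero.2 (Ne.symm hw1)
        have hw1' : w - 1 ≠ 0 := sub_ne_zero.2 hw1
        have hneg1 : ((-1:ℂ))^(m+1) * (-1)^(m+1) = 1 := by
          rw [← pow_add]; exact Even.neg_one_pow ⟨m+1, rfl⟩
        have hnegm : ((-1:ℂ))^m * (-1)^m = 1 := by
          rw [← pow_add]; exact Even.neg_one_pow ⟨m, rfl⟩
        -- claim 1
        have claim1 : P.eval 1 / ∏ y ∈ (insert 1 (insert w s)).erase 1, ((1:ℂ) - y)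
            = (-1)^m * v^(m+2) / (u - v) := by
          rw [Finset.erase_insert h1ws, Finset.prod_insert hws, hev]
          have e1 : ∏ y ∈ s, (u + (v*y-1)*1) = v^(m+1) * ∏ y ∈ s, (y - 1) := by
            rw [← hs, ← Finset.prod_const v, ← Finset.prod_mul_distrib]
            apply Finset.prod_congr rfl
            intro y _
            linear_combination huv
          have e2 : ∏ y ∈ s, ((1:ℂ) - y) = (-1)^(m+1) * ∏ y ∈ s, (y - 1) := by
            rw [← hs, ← Finset.prod_const (-1 : ℂ), ← Finset.prod_mul_distrib]
            apply Finset.prod_congr rfl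
            intro y _; ring
          rw [e1, e2, div_eq_div_iff
            (mul_ne_zero h1w (mul_ne_zero (pow_ne_zero _ (by norm_num)) hB)) hsub]
          linear_combination (v^(m+2) * (1-w) * (∏ y ∈ s, (y-1))) * hneg1 +
            (-(v^(m+1) * (∏ y ∈ s, (y-1)))) * hvw
        -- claim 2
        have claim2 : P.eval w / ∏ y ∈ (insert 1 (insert w s)).erase w, (w - y)
            = (-1)^(m+1) * u^(m+1) * v / (u - v) := by
          rw [Finset.erase_insert_of_ne (Ne.symm hw1), Finset.erase_insert hws,
            Finset.prod_insert h1, hev]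
          have ew : ∏ y ∈ s, (u + (v*y-1)*w) = w^(m+1) * ∏ y ∈ s, (v*y - u) := by
            rw [← hs, ← Finset.prod_const w, ← Finset.prod_mul_distrib]
            apply Finset.prod_congr rfl
            intro y _
            linear_combination w*huv - hvw
          have ep : ∏ y ∈ s, (v*y - u) = (-v)^(m+1) * ∏ y ∈ s, (w - y) := by
            rw [← hs, ← Finset.prod_const (-v), ← Finset.prod_mul_distrib]
            apply Finset.prod_congr rfl
            intro y _
            linear_combination hvw
          have epow : (w*(-v))^(m+1) = ((-1:ℂ))^(m+1) * u^(m+1) := by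
            rw [show w*(-v) = -u by linear_combination -hvw, neg_pow]
          rw [ew, ep, div_eq_div_iff (mul_ne_zero hw1' hD) hsub]
          linear_combination ((∏ y ∈ s, (w - y)) * (u - v)) * epow -
            ((-1:ℂ)^(m+1) * u^(m+1) * (∏ y ∈ s, (w - y))) * hvw
        -- claim 3
        have claim3 : ∀ x ∈ s, P.eval x / ∏ y ∈ (insert 1 (insert w s)).erase x, (x - y)
            = ((-1)^m * v) * ∏ y ∈ s.erase x, (u + v*x*y - x)/(y - x) := by
          intro x hx
          have hne1 : x ≠ 1 := hx1 x hx
          have hnew : x ≠ w := hxw x hx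
          have hx1' : x - 1 ≠ 0 := sub_ne_zero.2 hne1
          have hxw' : x - w ≠ 0 := sub_ne_zero.2 hnew
          have h1m : (1:ℂ) ∉ insert w (s.erase x) := by
            simp only [Finset.mem_insert]
            push_neg
            exact ⟨Ne.symm hw1, fun h => h1 (Finset.mem_of_mem_erase h)⟩
          have hwm : w ∉ s.erase x := fun h => hws (Finset.mem_of_mem_erase h)
          have hce : (s.erase x).card = m := by
            rw [Finset.card_erase_of_mem hx, hs]; norm_num
          rw [Finset.erase_insert_of_ne (Ne.symm hne1), Finset.erase_insert_of_ne (Ne.symm hnew),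
            Finset.prod_insert h1m, Finset.prod_insert hwm, hev,
            ← Finset.mul_prod_erase s _ hx, Finset.prod_div_distrib]
          have en : ∏ y ∈ s.erase x, (y - x) = (-1)^m * ∏ y ∈ s.erase x, (x - y) := by
            rw [← hce, ← Finset.prod_const (-1 : ℂ), ← Finset.prod_mul_distrib]
            apply Finset.prod_congr rfl
            intro y _; ring
          have enum : ∏ y ∈ s.erase x, (u + v*x*y - x) = ∏ y ∈ s.erase x, (u + (v*y-1)*x) := by
            apply Finset.prod_congr rfl
            intro y _; ring
          rw [en, enum, ← mul_div_assoc, div_eq_div_iff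
            (mul_ne_zero hx1' (mul_ne_zero hxw' (hDx x hx)))
            (mul_ne_zero (pow_ne_zero _ (by norm_num)) (hDx x hx))]
          linear_combination ((-1:ℂ)^m * (∏ y ∈ s.erase x, (u+(v*y-1)*x)) *
              (∏ y ∈ s.erase x, (x-y)) * (x-1)) * hvw +
            ((-1:ℂ)^m * (∏ y ∈ s.erase x, (u+(v*y-1)*x)) *
              (∏ y ∈ s.erase x, (x-y)) * x) * huv
        rw [Finset.sum_congr rfl claim3, ← Finset.mul_sum, claim1, claim2] at hls
        rw [show ((-1:ℂ))^(m+1) = -((-1)^m) by ring] at hls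
        refine mul_left_cancel₀ (mul_ne_zero (pow_ne_zero m (show (-1:ℂ) ≠ 0 by norm_num)) hv) ?_
        linear_combination hls



lemma pair_split {n : ℕ} (H : Fin (n+1) → Fin (n+1) → ℂ) :
    ∏ p ∈ Finset.univ.filter (fun p : Fin (n+1) × Fin (n+1) => p.1 < p.2), H p.1 p.2
    = (∏ j : Fin n, H 0 j.succ) *
      ∏ p ∈ Finset.univ.filter (fun p : Fin n × Fin n => p.1 < p.2), H p.1.succ p.2.succ := by
  classical
  rw [← Finset.prod_filter_mul_prod_filter_not
    (Finset.univ.filter (fun p : Fin (n+1) × Fin (n+1) => p.1 < p.2)) (fun p => p.1 = 0)]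
  congr 1
  · rw [Finset.filter_filter]
    refine Finset.prod_bij' (fun p hp => p.2.pred ?_) (fun j _ => ((0 : Fin (n+1)), j.succ))
      ?_ ?_ ?_ ?_ ?_
    · simp only [Finset.mem_filter, Finset.mem_univ, true_and] at hp
      exact Fin.pos_iff_ne_zero.1 (hp.2 ▸ hp.1)
    · intro p hp; exact Finset.mem_univ _
    · intro j hj
      simp [Fin.succ_pos]
    · intro p hp
      simp only [Finset.mem_filter, Finset.mem_univ, true_and] at hp
      simp only [Fin.succ_pred]
      exact Prod.ext hp.2.symm rfl
    · intro j hj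
      simp [Fin.pred_succ]
    · intro p hp
      simp only [Finset.mem_filter, Finset.mem_univ, true_and] at hp
      rw [Fin.succ_pred, hp.2]
  · rw [Finset.filter_filter]
    refine Finset.prod_bij' (fun p hp => (p.1.pred ?_, p.2.pred ?_))
      (fun q _ => (q.1.succ, q.2.succ)) ?_ ?_ ?_ ?_ ?_
    · simp only [Finset.mem_filter, Finset.mem_univ, true_and] at hp
      exact hp.2
    · simp only [Finset.mem_filter, Finset.mem_univ, true_and] at hp
      exact Fin.pos_iff_ne_zero.1 (lt_of_le_of_lt (Fin.zero_le _) hp.1)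
    · intro p hp
      simp only [Finset.mem_filter, Finset.mem_univ, true_and] at hp ⊢
      rw [← Fin.succ_lt_succ_iff, Fin.succ_pred, Fin.succ_pred]
      exact hp.1
    · intro q hq
      simp only [Finset.mem_filter, Finset.mem_univ, true_and] at hq ⊢
      exact ⟨Fin.succ_lt_succ_iff.2 hq, Fin.succ_ne_zero _⟩
    · intro p hp
      simp [Fin.succ_pred]
    · intro q hq
      simp [Fin.pred_succ]
    · intro p hp
      simp [Fin.succ_pred]

lemma erase_reindex {n : ℕ} (i : Fin (n+1)) (G : Fin (n+1) → ℂ) :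
    ∏ t : Fin n, G (Equiv.swap 0 i t.succ) = ∏ a ∈ Finset.univ.erase i, G a := by
  classical
  refine Finset.prod_bij' (fun t _ => Equiv.swap 0 i t.succ)
    (fun a ha => (Equiv.swap 0 i a).pred ?_) ?_ ?_ ?_ ?_ ?_
  · intro h
    have h2 := congrArg (Equiv.swap 0 i) h
    rw [Equiv.swap_apply_self, Equiv.swap_apply_left] at h2
    exact (Finset.mem_erase.1 ha).1 h2
  · intro t _
    refine Finset.mem_erase.2 ⟨?_, Finset.mem_univ _⟩
    intro h
    have h2 := congrArg (Equiv.swap 0 i) h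
    rw [Equiv.swap_apply_self, Equiv.swap_apply_right] at h2
    exact Fin.succ_ne_zero _ h2
  · intro a ha; exact Finset.mem_univ _
  · intro t _
    simp [Equiv.swap_apply_self, Fin.pred_succ]
  · intro a ha
    simp only [Fin.succ_pred, Equiv.swap_apply_self]
  · intro t _
    rfl



lemma symA (u v : ℂ) (huv : u + v = 1) (hu : u ≠ 0) (huv' : u ≠ v) :
    ∀ k : ℕ, ∀ ξ : Fin k → ℂ, Function.Injective ξ →
    ∑ σ : Equiv.Perm (Fin k),
      ∏ p ∈ Finset.univ.filter (fun p : Fin k × Fin k => p.1 < p.2),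
        (u + v * ξ (σ p.1) * ξ (σ p.2) - ξ (σ p.1)) / (ξ (σ p.2) - ξ (σ p.1))
    = ∏ i ∈ Finset.range k, (u^(i+1) - v^(i+1))/(u - v) := by
  intro k
  induction k with
  | zero =>
    intro ξ _
    simp
  | succ n IH =>
    intro ξ hξ
    have hι : ∀ i : Fin (n+1), Function.Injective
        (fun t : Fin n => Equiv.swap 0 i t.succ) := by
      intro i a b hab
      exact Fin.succ_injective n ((Equiv.swap 0 i).injective hab)
    have hξι : ∀ i : Fin (n+1), Function.Injective
        (fun t : Fin n => ξ (Equiv.swap 0 i t.succ)) :=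
      fun i => hξ.comp (hι i)
    rw [← Equiv.sum_comp Equiv.Perm.decomposeFin.symm, Fintype.sum_prod_type]
    have hstep : ∀ i : Fin (n+1), ∀ π : Equiv.Perm (Fin n),
        (∏ p ∈ Finset.univ.filter (fun p : Fin (n+1) × Fin (n+1) => p.1 < p.2),
          (u + v * ξ (Equiv.Perm.decomposeFin.symm (i, π) p.1)
              * ξ (Equiv.Perm.decomposeFin.symm (i, π) p.2)
            - ξ (Equiv.Perm.decomposeFin.symm (i, π) p.1)) /
          (ξ (Equiv.Perm.decomposeFin.symm (i, π) p.2)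
            - ξ (Equiv.Perm.decomposeFin.symm (i, π) p.1)))
        = (∏ a ∈ Finset.univ.erase i, (u + v * ξ i * ξ a - ξ i)/(ξ a - ξ i)) *
          ∏ p ∈ Finset.univ.filter (fun p : Fin n × Fin n => p.1 < p.2),
            (u + v * ξ (Equiv.swap 0 i (π p.1).succ) * ξ (Equiv.swap 0 i (π p.2).succ)
              - ξ (Equiv.swap 0 i (π p.1).succ)) /
            (ξ (Equiv.swap 0 i (π p.2).succ) - ξ (Equiv.swap 0 i (π p.1).succ)) := by
      intro i π
      rw [pair_split (fun a b =>
        (u + v * ξ (Equiv.Perm.decomposeFin.symm (i, π) a)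
            * ξ (Equiv.Perm.decomposeFin.symm (i, π) b)
          - ξ (Equiv.Perm.decomposeFin.symm (i, π) a)) /
        (ξ (Equiv.Perm.decomposeFin.symm (i, π) b)
          - ξ (Equiv.Perm.decomposeFin.symm (i, π) a)))]
      congr 1
      · have e1 : ∀ j : Fin n,
            (u + v * ξ (Equiv.Perm.decomposeFin.symm (i, π) 0)
                * ξ (Equiv.Perm.decomposeFin.symm (i, π) j.succ)
              - ξ (Equiv.Perm.decomposeFin.symm (i, π) 0)) /
            (ξ (Equiv.Perm.decomposeFin.symm (i, π) j.succ)
              - ξ (Equiv.Perm.decomposeFin.symm (i, π) 0))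
            = (u + v * ξ i * ξ (Equiv.swap 0 i (π j).succ) - ξ i) /
              (ξ (Equiv.swap 0 i (π j).succ) - ξ i) := by
          intro j
          rw [Equiv.Perm.decomposeFin_symm_apply_zero,
            Equiv.Perm.decomposeFin_symm_apply_succ]
        rw [Finset.prod_congr rfl (fun j _ => e1 j)]
        rw [Equiv.prod_comp π (fun t : Fin n =>
          (u + v * ξ i * ξ (Equiv.swap 0 i t.succ) - ξ i) /
            (ξ (Equiv.swap 0 i t.succ) - ξ i))]
        exact erase_reindex i (fun a => (u + v * ξ i * ξ a - ξ i)/(ξ a - ξ i))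
      · apply Finset.prod_congr rfl
        intro p _
        rw [Equiv.Perm.decomposeFin_symm_apply_succ,
          Equiv.Perm.decomposeFin_symm_apply_succ]
    have hsum : ∀ i : Fin (n+1),
        (∑ π : Equiv.Perm (Fin n),
          ∏ p ∈ Finset.univ.filter (fun p : Fin (n+1) × Fin (n+1) => p.1 < p.2),
            (u + v * ξ (Equiv.Perm.decomposeFin.symm (i, π) p.1)
                * ξ (Equiv.Perm.decomposeFin.symm (i, π) p.2)
              - ξ (Equiv.Perm.decomposeFin.symm (i, π) p.1)) /
            (ξ (Equiv.Perm.decomposeFin.symm (i, π) p.2)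
              - ξ (Equiv.Perm.decomposeFin.symm (i, π) p.1)))
        = (∏ a ∈ Finset.univ.erase i, (u + v * ξ i * ξ a - ξ i)/(ξ a - ξ i)) *
          ∏ j ∈ Finset.range n, (u^(j+1) - v^(j+1))/(u - v) := by
      intro i
      rw [Finset.sum_congr rfl (fun π _ => hstep i π), ← Finset.mul_sum]
      congr 1
      exact IH (fun t : Fin n => ξ (Equiv.swap 0 i t.succ)) (hξι i)
    rw [Finset.sum_congr rfl (fun i _ => hsum i), ← Finset.sum_mul]
    rw [Finset.prod_range_succ]
    rw [mul_comm (∏ j ∈ Finset.range n, (u^(j+1) - v^(j+1))/(u - v)) _]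
    congr 1
    -- ∑ i, ∏ over erase = (u^(n+1) - v^(n+1))/(u-v)
    have hcard : (Finset.univ.image ξ).card = n + 1 := by
      rw [Finset.card_image_of_injective _ hξ, Finset.card_univ, Fintype.card_fin]
    have hkey := keyB u v huv hu huv' (n+1) (Finset.univ.image ξ) hcard
    rw [Finset.sum_image (fun x _ y _ h => hξ h)] at hkey
    have hin : ∀ i : Fin (n+1),
        ∏ y ∈ (Finset.univ.image ξ).erase (ξ i), (u + v * ξ i * y - ξ i)/(y - ξ i)
        = ∏ a ∈ Finset.univ.erase i, (u + v * ξ i * ξ a - ξ i)/(ξ a - ξ i) := by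
      intro i
      rw [← Finset.image_erase hξ, Finset.prod_image (fun a _ b _ h => hξ h)]
    rw [Finset.sum_congr rfl (fun i _ => hin i)] at hkey
    exact hkey



/-- Symmetrization identity for the MADM:
`∑_{σ ∈ S_k} ∏_{i<j} (u + v ξ_{σ(i)} ξ_{σ(j)} − ξ_{σ(i)})/(ξ_{σ(j)} − ξ_{σ(i)})
  = u^{k(k−1)/2} ∏_{i=1}^{k} (1 − τ^i)/(1 − τ)` with `τ = v/u`. -/
theorem stmt0 (k : ℕ) (hk : 1 ≤ k) (u v : ℂ) (huv : u + v = 1) (hu : u ≠ 0)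
    (huneqv : u ≠ v) (ξ : Fin k → ℂ) (hξ : Function.Injective ξ) :
    ∑ σ : Equiv.Perm (Fin k),
      ∏ p ∈ Finset.univ.filter (fun p : Fin k × Fin k => p.1 < p.2),
        (u + v * ξ (σ p.1) * ξ (σ p.2) - ξ (σ p.1)) / (ξ (σ p.2) - ξ (σ p.1))
    = u ^ (k * (k - 1) / 2) *
        ∏ i ∈ Finset.range k, (1 - (v / u) ^ (i + 1)) / (1 - v / u) := by
  rw [symA u v huv hu huneqv k ξ hξ]
  have hsub : u - v ≠ 0 := sub_ne_zero.2 huneqv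
  have hfac : ∀ i ∈ Finset.range k,
      (u^(i+1) - v^(i+1))/(u - v) = u^i * ((1 - (v/u)^(i+1))/(1 - v/u)) := by
    intro i _
    have hτ : (1:ℂ) - v/u ≠ 0 := by
      intro h
      apply huneqv
      field_simp at h
      linear_combination h
    rw [div_pow]
    field_simp
    ring
  rw [Finset.prod_congr rfl hfac, Finset.prod_mul_distrib,
    Finset.prod_pow_eq_pow_sum, Finset.sum_range_id]
end

section
/- Let τ be real with 0 < τ < 1, let x ∈ ℤ, t ∈ ℝ, and let η be a complex number with |η| < 1. Define φ(ζ) = ((1 − ζ)/(1 − τζ))^x · exp([1/(1 − ζ) − 1/(1 − τζ)]t) · 1/(τ^{-1} − ζ). Then the sequence n ↦ τ^{-1} φ(τⁿη) (n = 0, 1, 2, …) is multipliable, the sequence n ↦ τ^{-1}/(τ^{-1} − τⁿη) is multipliable, and ∏_{n=0}^{∞} τ^{-1} φ(τⁿη) = (1 − η)^x · exp(tη/(1 − η)) · ∏_{n=0}^{∞} τ^{-1}/(τ^{-1} − τⁿη). -/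
open Filter Asymptotics Topology

lemma aux_mult (τ : ℝ) (hτ0 : 0 < τ) (hτ1 : τ < 1) (η : ℂ)
    (F : ℂ → ℂ) (hF0 : F 0 = 1) (hFd : DifferentiableAt ℂ F 0)
    (hne : ∀ n : ℕ, F ((τ : ℂ) ^ n * η) ≠ 0) :
    Multipliable (fun n : ℕ => F ((τ : ℂ) ^ n * η)) := by
  apply Complex.multipliable_of_summable_log
  have hτc : ‖(τ : ℂ)‖ < 1 := by
    rw [Complex.norm_real, Real.norm_eq_abs, abs_of_pos hτ0]; exact hτ1
  have htend : Tendsto (fun n : ℕ => (τ : ℂ) ^ n * η) atTop (𝓝 0) := by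
    simpa using (tendsto_pow_atTop_nhds_zero_of_norm_lt_one hτc).mul_const η
  have hHd : DifferentiableAt ℂ (fun z => Complex.log (F z)) 0 := by
    exact (Complex.differentiableAt_log (by rw [hF0]; exact Complex.one_mem_slitPlane)).comp 0 hFd
  have hBig : (fun z => Complex.log (F z)) =O[𝓝 0] (fun z : ℂ => z) := by
    have := hHd.hasFDerivAt.isBigO_sub
    simpa [hF0] using this
  have hcomp : (fun n : ℕ => Complex.log (F ((τ : ℂ) ^ n * η))) =O[atTop]
      (fun n : ℕ => (τ : ℂ) ^ n * η) := hBig.comp_tendsto htend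
  have hgeo : (fun n : ℕ => (τ : ℂ) ^ n * η) =O[atTop] (fun n : ℕ => τ ^ n) := by
    apply IsBigO.of_bound ‖η‖
    filter_upwards with n
    simp [norm_mul, norm_pow, Complex.norm_real, Real.norm_eq_abs, abs_of_pos hτ0,
      abs_of_nonneg (pow_nonneg hτ0.le n)]
    rw [mul_comm]
  exact summable_of_isBigO_nat (summable_geometric_of_lt_one hτ0.le hτ1) (hcomp.trans hgeo)

/-- Telescoping of the infinite product defining `φ_∞`: with
`φ(ζ) = ((1 − ζ)/(1 − τζ))^x · exp([1/(1 − ζ) − 1/(1 − τζ)]t) / (τ⁻¹ − ζ)`,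
for `|η| < 1` the products `∏_{n≥0} τ⁻¹ φ(τⁿη)` and `∏_{n≥0} τ⁻¹/(τ⁻¹ − τⁿη)` converge and
`∏_{n≥0} τ⁻¹ φ(τⁿη) = (1 − η)^x e^{tη/(1−η)} ∏_{n≥0} τ⁻¹/(τ⁻¹ − τⁿη)`. -/
theorem stmt9 (τ : ℝ) (hτ0 : 0 < τ) (hτ1 : τ < 1) (x : ℤ) (t : ℝ) (η : ℂ) (hη : ‖η‖ < 1)
    (φ : ℂ → ℂ)
    (hφ : ∀ ζ : ℂ, φ ζ = ((1 - ζ) / (1 - (τ : ℂ) * ζ)) ^ x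
        * Complex.exp ((1 / (1 - ζ) - 1 / (1 - (τ : ℂ) * ζ)) * (t : ℂ))
        * (1 / ((τ : ℂ)⁻¹ - ζ))) :
    Multipliable (fun n : ℕ => (τ : ℂ)⁻¹ * φ ((τ : ℂ) ^ n * η)) ∧
    Multipliable (fun n : ℕ => (τ : ℂ)⁻¹ / ((τ : ℂ)⁻¹ - (τ : ℂ) ^ n * η)) ∧
    ∏' n : ℕ, (τ : ℂ)⁻¹ * φ ((τ : ℂ) ^ n * η)
      = (1 - η) ^ x * Complex.exp ((t : ℂ) * η / (1 - η))
          * ∏' n : ℕ, (τ : ℂ)⁻¹ / ((τ : ℂ)⁻¹ - (τ : ℂ) ^ n * η) := by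
  have hτc0 : (τ : ℂ) ≠ 0 := by exact_mod_cast hτ0.ne'
  have hτinv : (τ : ℂ)⁻¹ ≠ 0 := inv_ne_zero hτc0
  set ζ : ℕ → ℂ := fun n => (τ : ℂ) ^ n * η with hζdef
  have hζnorm : ∀ n, ‖ζ n‖ < 1 := by
    intro n
    have h1 : ‖ζ n‖ = τ ^ n * ‖η‖ := by
      simp [hζdef, norm_mul, norm_pow, Complex.norm_real, Real.norm_eq_abs, abs_of_pos hτ0]
    rw [h1]
    exact lt_of_le_of_lt (mul_le_of_le_one_left (norm_nonneg η) (pow_le_one₀ hτ0.le hτ1.le)) hη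
  have h1 : ∀ n, (1 : ℂ) - ζ n ≠ 0 := by
    intro n h
    rw [sub_eq_zero] at h
    have := hζnorm n
    rw [← h] at this
    simp at this
  have hstep : ∀ n, (τ : ℂ) * ζ n = ζ (n + 1) := by
    intro n; simp only [hζdef]; ring
  have h3 : ∀ n, (τ : ℂ)⁻¹ - ζ n ≠ 0 := by
    intro n h
    rw [sub_eq_zero] at h
    have hnτ : (1 : ℝ) < ‖(τ : ℂ)⁻¹‖ := by
      rw [norm_inv, Complex.norm_real, Real.norm_eq_abs, abs_of_pos hτ0]
      exact (one_lt_inv₀ hτ0).2 hτ1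
    rw [h] at hnτ
    exact absurd (hnτ.trans (hζnorm n)) (lt_irrefl 1)
  set A : ℂ → ℂ := fun z => ((1 - z) / (1 - (τ : ℂ) * z)) ^ x
      * Complex.exp ((1 / (1 - z) - 1 / (1 - (τ : ℂ) * z)) * (t : ℂ)) with hAdef
  set G : ℂ → ℂ := fun z => (τ : ℂ)⁻¹ / ((τ : ℂ)⁻¹ - z) with hGdef
  have h2 : ∀ n, (1 : ℂ) - (τ : ℂ) * ζ n ≠ 0 := by
    intro n; rw [hstep n]; exact h1 (n + 1)
  have hAne : ∀ n, A (ζ n) ≠ 0 := by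
    intro n
    exact mul_ne_zero (zpow_ne_zero x (div_ne_zero (h1 n) (h2 n))) (Complex.exp_ne_zero _)
  have hGne : ∀ n, G (ζ n) ≠ 0 := fun n => div_ne_zero hτinv (h3 n)
  have hA0 : A 0 = 1 := by simp [hAdef]
  have hG0 : G 0 = 1 := by simp [hGdef, div_self hτinv]
  have hd1 : DifferentiableAt ℂ (fun z : ℂ => (1 : ℂ) - z) 0 :=
    (differentiableAt_const 1).sub differentiableAt_id
  have hd2 : DifferentiableAt ℂ (fun z : ℂ => (1 : ℂ) - (τ : ℂ) * z) 0 :=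
    (differentiableAt_const 1).sub ((differentiableAt_const _).mul differentiableAt_id)
  have hAd : DifferentiableAt ℂ A 0 := by
    apply DifferentiableAt.mul
    · apply DifferentiableAt.zpow
      · exact hd1.div hd2 (by simp)
      · left; simp
    · apply DifferentiableAt.cexp
      apply DifferentiableAt.mul _ (differentiableAt_const _)
      exact ((differentiableAt_const 1).div hd1 (by simp)).sub
        ((differentiableAt_const 1).div hd2 (by simp))
  have hGd : DifferentiableAt ℂ G 0 :=
    (differentiableAt_const _).div ((differentiableAt_const _).sub differentiableAt_id)
      (by simpa using hτinv)
  have MA : Multipliable (fun n : ℕ => A (ζ n)) := aux_mult τ hτ0 hτ1 η A hA0 hAd hAne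
  have MG : Multipliable (fun n : ℕ => G (ζ n)) := aux_mult τ hτ0 hτ1 η G hG0 hGd hGne
  have hFeq : (fun n : ℕ => (τ : ℂ)⁻¹ * φ ((τ : ℂ) ^ n * η)) = fun n : ℕ => A (ζ n) * G (ζ n) := by
    funext n
    rw [hφ]
    simp only [hAdef, hGdef, hζdef]
    ring
  have MF : Multipliable (fun n : ℕ => (τ : ℂ)⁻¹ * φ ((τ : ℂ) ^ n * η)) := by
    rw [hFeq]
    exact aux_mult τ hτ0 hτ1 η (fun z => A z * G z) (by show A 0 * G 0 = 1; rw [hA0, hG0, one_mul]) (hAd.mul hGd)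
      (fun n => mul_ne_zero (hAne n) (hGne n))
  refine ⟨MF, MG, ?_⟩
  -- compute the telescoping product
  set g : ℕ → ℂ := fun n => (1 - ζ n) ^ x * Complex.exp ((t : ℂ) / (1 - ζ n)) with hgdef
  have hgne : ∀ n, g n ≠ 0 := fun n =>
    mul_ne_zero (zpow_ne_zero x (h1 n)) (Complex.exp_ne_zero _)
  have key : ∀ n, A (ζ n) = g n / g (n + 1) := by
    intro n
    simp only [hAdef, hgdef, hstep n]
    have harg : (1 / (1 - ζ n) - 1 / (1 - ζ (n + 1))) * (t : ℂ)
        = (t : ℂ) / (1 - ζ n) - (t : ℂ) / (1 - ζ (n + 1)) := by ring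
    rw [harg, Complex.exp_sub, div_zpow, div_mul_div_comm]
  have partialprod : ∀ N, ∏ i ∈ Finset.range N, A (ζ i) = g 0 / g N := by
    intro N
    induction N with
    | zero => simp [div_self (hgne 0)]
    | succ N ih =>
        rw [Finset.prod_range_succ, ih, key N, div_mul_div_comm, mul_comm (g 0) (g N),
          mul_div_mul_left _ _ (hgne N)]
  have hτc : ‖(τ : ℂ)‖ < 1 := by
    rw [Complex.norm_real, Real.norm_eq_abs, abs_of_pos hτ0]; exact hτ1
  have htend : Tendsto ζ atTop (𝓝 0) := by
    simpa [hζdef] using (tendsto_pow_atTop_nhds_zero_of_norm_lt_one hτc).mul_const η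
  have hGgc : ContinuousAt (fun z : ℂ => (1 - z) ^ x * Complex.exp ((t : ℂ) / (1 - z))) 0 := by
    apply DifferentiableAt.continuousAt (𝕜 := ℂ)
    apply DifferentiableAt.mul
    · exact hd1.zpow (Or.inl (by simp))
    · exact ((differentiableAt_const _).div hd1 (by simp)).cexp
  have hgt : Tendsto g atTop (𝓝 (Complex.exp (t : ℂ))) := by
    have := hGgc.tendsto.comp htend
    rw [show Complex.exp (t : ℂ) = (1 - 0) ^ x * Complex.exp ((t : ℂ) / (1 - 0)) by simp]
    exact this
  have hlim : Tendsto (fun N => ∏ i ∈ Finset.range N, A (ζ i)) atTop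
      (𝓝 (g 0 / Complex.exp (t : ℂ))) := by
    simp only [partialprod]
    exact tendsto_const_nhds.div hgt (Complex.exp_ne_zero _)
  have tprodA : ∏' n : ℕ, A (ζ n) = g 0 / Complex.exp (t : ℂ) :=
    tendsto_nhds_unique MA.hasProd.tendsto_prod_nat hlim
  have hζ0 : ζ 0 = η := by simp [hζdef]
  have hg0 : g 0 / Complex.exp (t : ℂ) = (1 - η) ^ x * Complex.exp ((t : ℂ) * η / (1 - η)) := by
    have h1η : (1 : ℂ) - η ≠ 0 := by rw [← hζ0]; exact h1 0
    rw [hgdef]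
    simp only [hζ0]
    rw [mul_div_assoc, ← Complex.exp_sub]
    congr 1
    field_simp
    ring
  calc ∏' n : ℕ, (τ : ℂ)⁻¹ * φ ((τ : ℂ) ^ n * η)
      = ∏' n : ℕ, (A (ζ n) * G (ζ n)) := by rw [hFeq]
    _ = (∏' n : ℕ, A (ζ n)) * ∏' n : ℕ, G (ζ n) := MA.tprod_mul MG
    _ = (1 - η) ^ x * Complex.exp ((t : ℂ) * η / (1 - η))
          * ∏' n : ℕ, (τ : ℂ)⁻¹ / ((τ : ℂ)⁻¹ - (τ : ℂ) ^ n * η) := by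
        rw [tprodA, hg0]
end
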